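/- If A = (a_{ij}) is an N×N positive semidefinite complex matrix and λ ∈ ℂ^N satisfies ∑_{i,j} conj(λ_i) λ_j exp(a_{ij}) = 0, then ∑_{i,j} conj(λ_i) λ_j (a_{ij})^n = 0 for every n ≥ 0; in particular ∑_{i,j} conj(λ_i) λ_j a_{ij} = 0. -/

import Mathlib

open scoped ComplexOrder
open Complex Finset

private lemma gram_pow {N : ℕ} (A : Matrix (Fin N) (Fin N) ℂ) (hA : A.PosSemidef) (n : ℕ) :
    ∃ (κ : Type) (_ : Fintype κ) (f : κ → Fin N → ℂ),
      ∀ i j, (A i j) ^ n = ∑ k, (starRingEnd ℂ) (f k i) * f k j := by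
  obtain ⟨B, hB⟩ : ∃ B : Matrix (Fin N) (Fin N) ℂ, A = B.conjTranspose * B := by
    classical
    open scoped MatrixOrder in
    obtain ⟨B, hB⟩ := CStarAlgebra.nonneg_iff_eq_star_mul_self.mp hA.nonneg
    exact ⟨B, hB⟩
  induction n with
  | zero =>
      exact ⟨Fin 1, inferInstance, fun _ _ => 1, fun i j => by simp⟩
  | succ n ih =>
      obtain ⟨κ, instκ, f, hf⟩ := ih
      refine ⟨κ × Fin N, inferInstance, fun k i => f k.1 i * B k.2 i, fun i j => ?_⟩
      have hAij : A i j = ∑ k : Fin N, (starRingEnd ℂ) (B k i) * B k j := by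
        rw [hB]; simp [Matrix.mul_apply, Matrix.conjTranspose_apply]
      rw [pow_succ, hf, hAij, Fintype.sum_mul_sum, Fintype.sum_prod_type]
      refine Finset.sum_congr rfl fun k _ => Finset.sum_congr rfl fun m _ => ?_
      simp only [map_mul]
      ring

private lemma quad_nonneg {N : ℕ} (A : Matrix (Fin N) (Fin N) ℂ) (hA : A.PosSemidef)
    (l : Fin N → ℂ) (n : ℕ) :
    ∃ r : ℝ, 0 ≤ r ∧ ∑ i, ∑ j, (starRingEnd ℂ) (l i) * l j * (A i j) ^ n = (r : ℂ) := by
  obtain ⟨κ, instκ, f, hf⟩ := gram_pow A hA n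
  refine ⟨∑ k, Complex.normSq (∑ i, l i * f k i),
    Finset.sum_nonneg fun k _ => normSq_nonneg _, ?_⟩
  have key : ∀ i j, (starRingEnd ℂ) (l i) * l j * (A i j) ^ n
      = ∑ k, (starRingEnd ℂ) (l i * f k i) * (l j * f k j) := fun i j => by
    rw [hf, Finset.mul_sum]
    refine Finset.sum_congr rfl fun k _ => ?_
    simp only [map_mul]; ring
  calc ∑ i, ∑ j, (starRingEnd ℂ) (l i) * l j * (A i j) ^ n
      = ∑ i, ∑ j, ∑ k, (starRingEnd ℂ) (l i * f k i) * (l j * f k j) := by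
        exact Finset.sum_congr rfl fun i _ => Finset.sum_congr rfl fun j _ => key i j
    _ = ∑ i, ∑ k, ∑ j, (starRingEnd ℂ) (l i * f k i) * (l j * f k j) :=
        Finset.sum_congr rfl fun i _ => Finset.sum_comm
    _ = ∑ k, ∑ i, ∑ j, (starRingEnd ℂ) (l i * f k i) * (l j * f k j) :=
        Finset.sum_comm
    _ = ∑ k, (starRingEnd ℂ) (∑ i, l i * f k i) * (∑ j, l j * f k j) := by
        refine Finset.sum_congr rfl fun k _ => ?_
        rw [map_sum, Finset.sum_mul_sum]
    _ = ((∑ k, Complex.normSq (∑ i, l i * f k i) : ℝ) : ℂ) := by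
        rw [Complex.ofReal_sum]
        exact Finset.sum_congr rfl fun k _ => Complex.normSq_eq_conj_mul_self.symm

theorem stmt18 {N : ℕ} (A : Matrix (Fin N) (Fin N) ℂ) (hA : A.PosSemidef)
    (l : Fin N → ℂ)
    (h : ∑ i, ∑ j, (starRingEnd ℂ) (l i) * l j * Complex.exp (A i j) = 0) :
    (∀ n : ℕ, ∑ i, ∑ j, (starRingEnd ℂ) (l i) * l j * (A i j) ^ n = 0) ∧
      ∑ i, ∑ j, (starRingEnd ℂ) (l i) * l j * A i j = 0 := by
  classical
  -- choose the nonnegative real value of each power quadratic form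
  choose r hr hqr using quad_nonneg A hA l
  -- summability of each entry series
  have hsump : ∀ i j : Fin N, Summable fun n : ℕ =>
      (starRingEnd ℂ) (l i) * l j * ((A i j) ^ n / (n.factorial)) := fun i j =>
    (NormedSpace.expSeries_div_summable (A i j)).mul_left _
  have hsumq : Summable fun n : ℕ =>
      ∑ i, ∑ j, (starRingEnd ℂ) (l i) * l j * ((A i j) ^ n / (n.factorial)) := by
    refine summable_sum fun i _ => summable_sum fun j _ => hsump i j
  -- rewrite the exp hypothesis as a tsum
  have hexp : ∀ z : ℂ, Complex.exp z = ∑' n : ℕ, z ^ n / (n.factorial) := fun z => by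
    rw [Complex.exp_eq_exp_ℂ, NormedSpace.exp_eq_tsum_div]
  have h0 : (∑' n : ℕ, ∑ i, ∑ j, (starRingEnd ℂ) (l i) * l j * ((A i j) ^ n / (n.factorial))) = 0 := by
    rw [← h]
    rw [Summable.tsum_finsetSum fun i _ => summable_sum fun j _ => hsump i j]
    refine Finset.sum_congr rfl fun i _ => ?_
    rw [Summable.tsum_finsetSum fun j _ => hsump i j]
    refine Finset.sum_congr rfl fun j _ => ?_
    rw [tsum_mul_left, hexp]
  -- the terms are real and nonnegative
  have hterm : ∀ n : ℕ, (∑ i, ∑ j, (starRingEnd ℂ) (l i) * l j * ((A i j) ^ n / (n.factorial)))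
      = ((r n / (n.factorial) : ℝ) : ℂ) := fun n => by
    have : ∑ i, ∑ j, (starRingEnd ℂ) (l i) * l j * ((A i j) ^ n / (n.factorial))
        = (∑ i, ∑ j, (starRingEnd ℂ) (l i) * l j * (A i j) ^ n) / (n.factorial) := by
      rw [Finset.sum_div]
      refine Finset.sum_congr rfl fun i _ => ?_
      rw [Finset.sum_div]
      refine Finset.sum_congr rfl fun j _ => ?_
      ring
    rw [this, hqr n]
    push_cast
    ring
  -- pass to a real series
  have hsumr : Summable fun n : ℕ => r n / (n.factorial) := by
    rw [← Complex.summable_ofReal]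
    exact hsumq.congr fun n => (hterm n)
  have h0r : (∑' n : ℕ, r n / (n.factorial)) = 0 := by
    have : ((∑' n : ℕ, r n / (n.factorial) : ℝ) : ℂ) = 0 := by
      rw [Complex.ofReal_tsum]
      rw [← h0]
      exact tsum_congr fun n => (hterm n).symm
    exact_mod_cast this
  have hnn : ∀ n : ℕ, 0 ≤ r n / (n.factorial) := fun n =>
    div_nonneg (hr n) (by positivity)
  have hzero : ∀ n : ℕ, r n = 0 := by
    intro n
    have hle : r n / (n.factorial) ≤ 0 := h0r ▸ hsumr.le_tsum n fun m _ => hnn m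
    have : r n / (n.factorial) = 0 := le_antisymm hle (hnn n)
    have hfac : ((n.factorial) : ℝ) ≠ 0 := by positivity
    field_simp at this
    simpa using this
  have hmain : ∀ n : ℕ, ∑ i, ∑ j, (starRingEnd ℂ) (l i) * l j * (A i j) ^ n = 0 := fun n => by
    rw [hqr n, hzero n]; simp
  refine ⟨hmain, ?_⟩
  have := hmain 1
  simpa using this
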